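/- Let Φ be a root system in a finite-dimensional real vector space and let Γ be a group graded by Φ with root subgroups {K_α}_{α∈Φ}. If Φ₁, Φ₂ ∈ Borel(Φ) are co-maximal, then the subgroup K_{(Φ₁∪Φ₂)∖(Φ₁∩Φ₂)} normalizes both K_{Φ₁∩Φ₂} and K_{−(Φ₁∩Φ₂)}. -/

import Mathlib

universe u v

variable {E : Type u} [AddCommGroup E] [Module ℝ E] [FiniteDimensional ℝ E]
variable {Γ : Type v} [Group Γ]

open scoped commutatorElement

/-- `Φ` is a root system in `E`: a finite set spanning `E`, not containing `0`, and
closed under negation. -/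
def IsRootSystem (Φ : Set E) : Prop :=
  Φ.Finite ∧ Submodule.span ℝ Φ = ⊤ ∧ (0 : E) ∉ Φ ∧ ∀ α ∈ Φ, -α ∈ Φ

/-- A linear functional is in general position with respect to `Φ` if it does not
vanish on `Φ` and takes distinct values at distinct roots. -/
def IsGeneralPosition (Φ : Set E) (f : E →ₗ[ℝ] ℝ) : Prop :=
  (∀ α ∈ Φ, f α ≠ 0) ∧ ∀ α ∈ Φ, ∀ β ∈ Φ, α ≠ β → f α ≠ f β

/-- `B` is a Borel set of `Φ`. -/
def IsBorelSet (Φ B : Set E) : Prop :=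
  ∃ f : E →ₗ[ℝ] ℝ, IsGeneralPosition Φ f ∧ B = {α ∈ Φ | 0 < f α}

/-- Two sets are co-minimal if their intersection spans a 1-dimensional subspace. -/
def CoMinimal (A B : Set E) : Prop :=
  Module.finrank ℝ ↥(Submodule.span ℝ (A ∩ B)) = 1

/-- Two Borel sets `A`, `B` are co-maximal if `A` and `−B` are co-minimal. -/
def CoMaximal (A B : Set E) : Prop := CoMinimal A (-B)

/-- The subgroup `K_A = ⟨K_α : α ∈ A⟩` generated by the root subgroups of roots in
`A`. -/
def KA (K : E → Subgroup Γ) (A : Set E) : Subgroup Γ := ⨆ α ∈ A, K α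

/-- The group `Γ` is graded by the root system `Φ` with root subgroups `K α`:
the `K α`, `α ∈ Φ`, generate `Γ`, and for `α, β ∈ Φ` with `β ∉ ℝ_{<0}·α`,
`[K_α, K_β] ⊆ ⟨K_γ : γ = aα + bβ ∈ Φ, a, b ≥ 1⟩`. -/
def IsGraded (Φ : Set E) (K : E → Subgroup Γ) : Prop :=
  (⨆ α ∈ Φ, K α) = ⊤ ∧
  ∀ α ∈ Φ, ∀ β ∈ Φ, (¬ ∃ c : ℝ, c < 0 ∧ β = c • α) →
    ∀ g ∈ K α, ∀ h ∈ K β,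
      ⁅g, h⁆ ∈ KA K {γ ∈ Φ | ∃ a b : ℝ, 1 ≤ a ∧ 1 ≤ b ∧ γ = a • α + b • β}

/-- The boundary of a Borel set `Φ₁` of `Φ`. -/
def borelBoundary (Φ Φ₁ : Set E) : Set E :=
  {α ∈ Φ₁ | ∃ Φ₂, IsBorelSet Φ Φ₂ ∧ CoMinimal Φ₁ Φ₂ ∧ α ∈ Φ₁ ∩ Φ₂}

/-- The core of a Borel set `Φ₁` of `Φ`. -/
def borelCore (Φ Φ₁ : Set E) : Set E := Φ₁ \ borelBoundary Φ Φ₁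

/-- The grading is strong if, in addition, for every Borel set `Φ₁` and every
`β ∈ Core(Φ₁)`, `K_β ⊆ ⟨K_γ : γ ∈ Φ₁ ∖ ℝ_{>0}·β⟩`. -/
def IsStronglyGraded (Φ : Set E) (K : E → Subgroup Γ) : Prop :=
  IsGraded Φ K ∧
  ∀ Φ₁ : Set E, IsBorelSet Φ Φ₁ → ∀ β ∈ borelCore Φ Φ₁,
    K β ≤ KA K (Φ₁ \ {x | ∃ c : ℝ, 0 < c ∧ x = c • β})

/-- A set of roots is irreducible if it admits no partition into two disjoint nonempty
subsets whose spans intersect trivially. -/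
def IsIrreducibleRootSet (Ψ : Set E) : Prop :=
  ¬ ∃ A B : Set E, A.Nonempty ∧ B.Nonempty ∧ Disjoint A B ∧ A ∪ B = Ψ ∧
    Submodule.span ℝ A ⊓ Submodule.span ℝ B = ⊥

/-- `Ψ` is a root subsystem of `Φ`. -/
def IsRootSubsystem (Φ Ψ : Set E) : Prop :=
  Ψ.Nonempty ∧ Ψ ⊆ Φ ∧ Φ ∩ (Submodule.span ℝ Ψ : Set E) = Ψ

/-- `Φ` is regular: every root lies in an irreducible root subsystem spanning a
2-dimensional subspace. -/
def IsRegularRootSystem (Φ : Set E) : Prop :=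
  ∀ α ∈ Φ, ∃ Ψ : Set E, IsRootSubsystem Φ Ψ ∧ IsIrreducibleRootSet Ψ ∧
    Module.finrank ℝ ↥(Submodule.span ℝ Ψ) = 2 ∧ α ∈ Ψ

set_option linter.unusedSectionVars false

lemma KA_mono (K : E → Subgroup Γ) {A B : Set E} (h : A ⊆ B) : KA K A ≤ KA K B :=
  iSup₂_le fun α hα => le_iSup₂ (f := fun α (_ : α ∈ B) => K α) α (h hα)

lemma mem_KA (K : E → Subgroup Γ) {A : Set E} {β : E} (hβ : β ∈ A) {v : Γ}
    (hv : v ∈ K β) : v ∈ KA K A :=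
  le_iSup₂ (f := fun α (_ : α ∈ A) => K α) β hβ hv

lemma conj_mem_KA (K : E → Subgroup Γ) {B : Set E} {g : Γ}
    (h : ∀ β ∈ B, ∀ x ∈ K β, g * x * g⁻¹ ∈ KA K B) :
    ∀ n ∈ KA K B, g * n * g⁻¹ ∈ KA K B := by
  have key : KA K B ≤ Subgroup.comap ((MulAut.conj g).toMonoidHom) (KA K B) :=
    iSup₂_le fun β hβ => fun x hx => Subgroup.mem_comap.mpr (by simpa using h β hβ x hx)
  intro n hn
  simpa using key hn

lemma KA_le_normalizer (K : E → Subgroup Γ) {A B : Set E}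
    (h : ∀ α ∈ A, ∀ g ∈ K α, ∀ β ∈ B, ∀ x ∈ K β, g * x * g⁻¹ ∈ KA K B) :
    KA K A ≤ Subgroup.normalizer (KA K B : Set Γ) := by
  refine iSup₂_le fun α hα g hg => ?_
  rw [Subgroup.mem_normalizer_iff]
  intro n
  constructor
  · exact fun hn => conj_mem_KA K (h α hα g hg) n hn
  · intro hn
    have := conj_mem_KA K (h α hα g⁻¹ ((K α).inv_mem hg)) _ hn
    simpa [mul_assoc] using this

lemma helperLemma (Φ : Set E) (hΦ : IsRootSystem Φ) (K : E → Subgroup Γ) (hgr : IsGraded Φ K)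
    (f g : E →ₗ[ℝ] ℝ) (hf : IsGeneralPosition Φ f) (hg : IsGeneralPosition Φ g)
    (h1 : Module.finrank ℝ ↥(Submodule.span ℝ {α ∈ Φ | 0 < f α ∧ g α < 0}) = 1) :
    KA K {α ∈ Φ | (0 < f α ∧ g α < 0) ∨ (f α < 0 ∧ 0 < g α)} ≤
      Subgroup.normalizer (KA K {α ∈ Φ | 0 < f α ∧ 0 < g α} : Set Γ) := by
  set D : Set E := {α ∈ Φ | 0 < f α ∧ g α < 0} with hD
  set W : Submodule ℝ E := Submodule.span ℝ D with hWdef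
  set T : Set E := {α ∈ Φ | 0 < f α ∧ 0 < g α} with hT
  have hDne : D.Nonempty := by
    by_contra h
    rw [Set.not_nonempty_iff_eq_empty] at h
    have hW0 : W = ⊥ := by rw [hWdef, h, Submodule.span_empty]
    rw [hW0] at h1
    simp at h1
  obtain ⟨δ, hδΦ, hδf, hδg⟩ := hDne
  have hδW : δ ∈ W := Submodule.subset_span (show δ ∈ D from ⟨hδΦ, hδf, hδg⟩)
  have hδ0 : δ ≠ 0 := by
    intro h; rw [h, map_zero] at hδf; exact lt_irrefl 0 hδf
  have hWs : ∀ x ∈ W, ∃ c : ℝ, x = c • δ := by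
    have hle : Submodule.span ℝ {δ} ≤ W := Submodule.span_le.mpr (by simpa using hδW)
    have heq : Submodule.span ℝ {δ} = W :=
      Submodule.eq_of_le_of_finrank_le hle
        (by rw [h1, finrank_span_singleton hδ0])
    intro x hx
    rw [← heq] at hx
    obtain ⟨c, hc⟩ := Submodule.mem_span_singleton.mp hx
    exact ⟨c, hc.symm⟩
  have hnegD : ∀ γ ∈ Φ, f γ < 0 → 0 < g γ → γ ∈ W := by
    intro γ hγ h1' h2'
    have hmem : -γ ∈ D := by
      refine ⟨hΦ.2.2.2 γ hγ, ?_, ?_⟩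
      · rw [map_neg]; linarith
      · rw [map_neg]; linarith
    have := W.neg_mem (Submodule.subset_span hmem : -γ ∈ W)
    simpa using this
  have hsign : ∀ γ ∈ Φ, γ ∉ (W : Set E) → (0 < f γ ↔ 0 < g γ) := by
    intro γ hγ hγW
    constructor
    · intro hfγ
      rcases lt_trichotomy (g γ) 0 with h | h | h
      · exact absurd (Submodule.subset_span (show γ ∈ D from ⟨hγ, hfγ, h⟩)) hγW
      · exact absurd h (hg.1 γ hγ)
      · exact h
    · intro hgγ
      rcases lt_trichotomy (f γ) 0 with h | h | h
      · exact absurd (hnegD γ hγ h hgγ) hγW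
      · exact absurd h (hf.1 γ hγ)
      · exact h
  have hTW : ∀ β ∈ T, β ∉ (W : Set E) := by
    rintro β ⟨hβΦ, hβf, hβg⟩ hβW
    obtain ⟨c, rfl⟩ := hWs β hβW
    rw [map_smul, smul_eq_mul] at hβf hβg
    nlinarith [mul_pos hβf hβg, mul_neg_of_pos_of_neg hδf hδg, sq_nonneg c]
  refine KA_le_normalizer K ?_
  rintro α ⟨hαΦ, hαsgn⟩ u hu β hβT v hv
  have hβΦ : β ∈ Φ := hβT.1
  have hαW : α ∈ (W : Set E) := by
    rcases hαsgn with ⟨h1', h2'⟩ | ⟨h1', h2'⟩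
    · exact Submodule.subset_span ⟨hαΦ, h1', h2'⟩
    · exact hnegD α hαΦ h1' h2'
  have hnneg : ¬ ∃ c : ℝ, c < 0 ∧ β = c • α := by
    rintro ⟨c, _, rfl⟩
    exact hTW _ hβT (Submodule.smul_mem W c hαW)
  have hcomm := hgr.2 α hαΦ β hβΦ hnneg u hu v hv
  have hsub : {γ ∈ Φ | ∃ a b : ℝ, 1 ≤ a ∧ 1 ≤ b ∧ γ = a • α + b • β} ⊆ T := by
    rintro γ ⟨hγΦ, a, b, ha, hb, rfl⟩
    obtain ⟨_, hβf, hβg⟩ := hβT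
    have hγW : a • α + b • β ∉ (W : Set E) := by
      intro hmem
      have hb0 : (b : ℝ) ≠ 0 := by linarith
      have hbβ : b • β ∈ W := by
        have := W.sub_mem hmem (W.smul_mem a hαW)
        simpa using this
      have hβW : β ∈ W := by
        have := W.smul_mem b⁻¹ hbβ
        rwa [inv_smul_smul₀ hb0] at this
      exact hTW β ⟨hβΦ, hβf, hβg⟩ hβW
    have hiff := hsign _ hγΦ hγW
    rcases hαsgn with ⟨h1', h2'⟩ | ⟨h1', h2'⟩
    · have hfγ : 0 < f (a • α + b • β) := by
        rw [map_add, map_smul, map_smul, smul_eq_mul, smul_eq_mul]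
        nlinarith
      exact ⟨hγΦ, hfγ, hiff.mp hfγ⟩
    · have hgγ : 0 < g (a • α + b • β) := by
        rw [map_add, map_smul, map_smul, smul_eq_mul, smul_eq_mul]
        nlinarith
      exact ⟨hγΦ, hiff.mpr hgγ, hgγ⟩
  have hcomm' : ⁅u, v⁆ ∈ KA K T := KA_mono K hsub hcomm
  have heq : u * v * u⁻¹ = ⁅u, v⁆ * v := by group
  rw [heq]
  exact (KA K T).mul_mem hcomm' (mem_KA K hβT hv)

lemma negGP (Φ : Set E) (f : E →ₗ[ℝ] ℝ) (hf : IsGeneralPosition Φ f) :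
    IsGeneralPosition Φ (-f) :=
  ⟨fun α hα => by simpa using hf.1 α hα,
   fun α hα β hβ hne => by simpa using hf.2 α hα β hβ hne⟩

/-- Let `Φ` be a root system and `Γ` a group graded by `Φ` with root
subgroups `{K_α}`.  If `Φ₁, Φ₂ ∈ Borel(Φ)` are co-maximal, then the subgroup
`K_{(Φ₁∪Φ₂)∖(Φ₁∩Φ₂)}` normalizes both `K_{Φ₁∩Φ₂}` and `K_{−(Φ₁∩Φ₂)}`. -/
theorem comaximal_intersection_normalized
    (Φ : Set E) (hΦ : IsRootSystem Φ) (K : E → Subgroup Γ) (hgr : IsGraded Φ K)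
    (Φ₁ Φ₂ : Set E) (h₁ : IsBorelSet Φ Φ₁) (h₂ : IsBorelSet Φ Φ₂)
    (hcm : CoMaximal Φ₁ Φ₂) :
    KA K ((Φ₁ ∪ Φ₂) \ (Φ₁ ∩ Φ₂)) ≤ Subgroup.normalizer (KA K (Φ₁ ∩ Φ₂) : Set Γ) ∧
    KA K ((Φ₁ ∪ Φ₂) \ (Φ₁ ∩ Φ₂)) ≤ Subgroup.normalizer (KA K (-(Φ₁ ∩ Φ₂)) : Set Γ) := by
  obtain ⟨f, hf, hΦ₁⟩ := h₁
  obtain ⟨g, hg, hΦ₂⟩ := h₂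
  have hnegΦ : ∀ x : E, -x ∈ Φ ↔ x ∈ Φ :=
    fun x => ⟨fun h => by simpa using hΦ.2.2.2 _ h, fun h => hΦ.2.2.2 x h⟩
  -- basic set identities
  have eD : Φ₁ ∩ (-Φ₂) = {α ∈ Φ | 0 < f α ∧ g α < 0} := by
    ext x
    simp only [hΦ₁, hΦ₂, Set.mem_inter_iff, Set.mem_neg, Set.mem_setOf_eq, map_neg]
    constructor
    · rintro ⟨⟨h1, h2⟩, ⟨h3, h4⟩⟩
      exact ⟨h1, h2, by linarith⟩
    · rintro ⟨h1, h2, h3⟩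
      exact ⟨⟨h1, h2⟩, (hnegΦ x).mpr h1, by linarith⟩
  have eP : Φ₁ ∩ Φ₂ = {α ∈ Φ | 0 < f α ∧ 0 < g α} := by
    ext x
    simp only [hΦ₁, hΦ₂, Set.mem_inter_iff, Set.mem_setOf_eq]
    tauto
  have eS : (Φ₁ ∪ Φ₂) \ (Φ₁ ∩ Φ₂) =
      {α ∈ Φ | (0 < f α ∧ g α < 0) ∨ (f α < 0 ∧ 0 < g α)} := by
    ext x
    simp only [hΦ₁, hΦ₂, Set.mem_diff, Set.mem_union, Set.mem_inter_iff,
      Set.mem_setOf_eq]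
    constructor
    · rintro ⟨h1 | h1, h2⟩
      · refine ⟨h1.1, Or.inl ⟨h1.2, ?_⟩⟩
        rcases lt_trichotomy (g x) 0 with h | h | h
        · exact h
        · exact absurd h (hg.1 x h1.1)
        · exact absurd ⟨h1, h1.1, h⟩ h2
      · refine ⟨h1.1, Or.inr ⟨?_, h1.2⟩⟩
        rcases lt_trichotomy (f x) 0 with h | h | h
        · exact h
        · exact absurd h (hf.1 x h1.1)
        · exact absurd ⟨⟨h1.1, h⟩, h1⟩ h2
    · rintro ⟨h1, ⟨h2, h3⟩ | ⟨h2, h3⟩⟩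
      · exact ⟨Or.inl ⟨h1, h2⟩, fun h => by linarith [h.2.2]⟩
      · exact ⟨Or.inr ⟨h1, h3⟩, fun h => by linarith [h.1.2]⟩
  have hcm' : Module.finrank ℝ
      ↥(Submodule.span ℝ {α ∈ Φ | 0 < f α ∧ g α < 0}) = 1 := by
    rw [← eD]; exact hcm
  constructor
  · -- first normalizer
    rw [eS, eP]
    exact helperLemma Φ hΦ K hgr f g hf hg hcm'
  · -- second normalizer: apply helper to (-f, -g)
    have eD2 : {α ∈ Φ | 0 < (-f) α ∧ (-g) α < 0} = -{α ∈ Φ | 0 < f α ∧ g α < 0} := by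
      ext x
      simp only [Set.mem_neg, Set.mem_setOf_eq, LinearMap.neg_apply, map_neg,
        neg_pos, neg_lt_zero, hnegΦ]
    have hcm2 : Module.finrank ℝ
        ↥(Submodule.span ℝ {α ∈ Φ | 0 < (-f) α ∧ (-g) α < 0}) = 1 := by
      rw [eD2, Submodule.span_neg]
      exact hcm'
    have key := helperLemma Φ hΦ K hgr (-f) (-g) (negGP Φ f hf) (negGP Φ g hg) hcm2
    have eS2 : {α ∈ Φ | (0 < (-f) α ∧ (-g) α < 0) ∨ ((-f) α < 0 ∧ 0 < (-g) α)} =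
        (Φ₁ ∪ Φ₂) \ (Φ₁ ∩ Φ₂) := by
      rw [eS]
      ext x
      simp only [Set.mem_setOf_eq, LinearMap.neg_apply, neg_pos, neg_lt_zero]
      tauto
    have eP2 : {α ∈ Φ | 0 < (-f) α ∧ 0 < (-g) α} = -(Φ₁ ∩ Φ₂) := by
      rw [eP]
      ext x
      simp only [Set.mem_neg, Set.mem_setOf_eq, LinearMap.neg_apply, neg_pos,
        map_neg, hnegΦ]
    rw [eS2, eP2] at key
    exact key
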